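/- The closed subgroup P of SL₂(ℤ₃) generated by x and y equals the preimage, under the reduction homomorphism SL₂(ℤ₃) → SL₂(ℤ/3ℤ), of the cyclic subgroup of order 3 generated by the image of x; in particular P is a closed subgroup of index 8 in SL₂(ℤ₃) (a Sylow pro-3 subgroup). -/

import Mathlib

open Matrix MatrixGroups Topology Filter

noncomputable section

/-- The topology on `SL(n, R)` induced from the space of matrices. -/
instance {n : Type*} [DecidableEq n] [Fintype n] {R : Type*} [CommRing R] [TopologicalSpace R] :
    TopologicalSpace (SpecialLinearGroup n R) :=
  inferInstanceAs (TopologicalSpace {A : Matrix n n R // A.det = 1})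

/-- `SL(n, R)` is a topological group. -/
instance {n : Type*} [DecidableEq n] [Fintype n] {R : Type*} [CommRing R] [TopologicalSpace R]
    [IsTopologicalRing R] : IsTopologicalGroup (SpecialLinearGroup n R) where
  continuous_mul := by
    apply continuous_induced_rng.2
    exact (continuous_subtype_val.comp continuous_fst).mul (continuous_subtype_val.comp continuous_snd)
  continuous_inv := by
    have h : Continuous fun A : SpecialLinearGroup n R => ((A : Matrix n n R)).adjugate :=
      Continuous.matrix_adjugate continuous_subtype_val
    have e : (fun A : SpecialLinearGroup n R => ((A⁻¹ : SpecialLinearGroup n R) : Matrix n n R))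
        = fun A : SpecialLinearGroup n R => ((A : Matrix n n R)).adjugate := by
      funext A; exact Matrix.SpecialLinearGroup.coe_inv A
    apply continuous_induced_rng.2
    show Continuous fun A : SpecialLinearGroup n R => ((A⁻¹ : SpecialLinearGroup n R) : Matrix n n R)
    rw [e]; exact h

namespace Stmt1Aux

abbrev R3 := ℤ_[3]
abbrev Mat := Matrix (Fin 2) (Fin 2) ℤ_[3]

/-- entrywise congruence mod 3^n -/
def Cong (n : ℕ) (A B : Mat) : Prop := ∀ i j, (3:R3)^n ∣ (A i j - B i j)

theorem Cong.refl (n : ℕ) (A : Mat) : Cong n A A := fun i j => by simp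

theorem Cong.symm {n : ℕ} {A B : Mat} (h : Cong n A B) : Cong n B A := fun i j => by
  have := (h i j).neg_right; simpa using this

theorem Cong.trans {n : ℕ} {A B C : Mat} (h1 : Cong n A B) (h2 : Cong n B C) : Cong n A C :=
  fun i j => by have := dvd_add (h1 i j) (h2 i j); simpa using this

theorem Cong.mono {m n : ℕ} (hmn : m ≤ n) {A B : Mat} (h : Cong n A B) : Cong m A B :=
  fun i j => dvd_trans (pow_dvd_pow _ hmn) (h i j)

theorem dvd_mul_sub_mul {d a b c e : R3} (h1 : d ∣ a - b) (h2 : d ∣ c - e) :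
    d ∣ a * c - b * e := by
  have : a * c - b * e = (a - b) * c + b * (c - e) := by ring
  rw [this]; exact dvd_add (h1.mul_right c) (h2.mul_left b)

theorem Cong.mul {n : ℕ} {A B A' B' : Mat} (h : Cong n A B) (h' : Cong n A' B') :
    Cong n (A * A') (B * B') := by
  intro i j
  rw [Matrix.mul_apply, Matrix.mul_apply, Fin.sum_univ_two, Fin.sum_univ_two]
  have := dvd_add (dvd_mul_sub_mul (h i 0) (h' 0 j)) (dvd_mul_sub_mul (h i 1) (h' 1 j))
  convert this using 1; ring

theorem cong_iff_exists {n : ℕ} {A B : Mat} :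
    Cong n A B ↔ ∃ C : Mat, A = B + (3:R3)^n • C := by
  constructor
  · intro h
    refine ⟨fun i j => (h i j).choose, ?_⟩
    ext i j
    have := (h i j).choose_spec
    simp only [Matrix.add_apply, Matrix.smul_apply, smul_eq_mul]
    show A i j = B i j + (3:R3)^n * (h i j).choose
    linear_combination this
  · rintro ⟨C, rfl⟩
    intro i j
    simp only [Matrix.add_apply, Matrix.smul_apply, smul_eq_mul, add_sub_cancel_left]
    exact Dvd.intro _ rfl


theorem expand_sq (r : R3) (G : Mat) :
    (1 + r • G)^2 = 1 + (2*r) • G + (r^2) • (G*G) := by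
  rw [sq]
  simp only [mul_add, add_mul, one_mul, mul_one, smul_mul_assoc, mul_smul_comm, smul_smul]
  module

theorem expand_cube (r : R3) (G : Mat) :
    (1 + r • G)^3 = 1 + (3*r) • G + (3*r^2) • (G*G) + (r^3) • (G*G*G) := by
  have h3 : (1 + r • G)^3 = (1 + r • G)^2 * (1 + r • G) := by rw [pow_succ]
  rw [h3, expand_sq]
  simp only [mul_add, add_mul, one_mul, mul_one, smul_mul_assoc, mul_smul_comm, smul_smul]
  rw [show G * G * G = G * (G * G) by rw [mul_assoc]] at *
  module

/-- key cubing step -/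
theorem Cong.cube {n : ℕ} (hn : 1 ≤ n) {u : Mat} {E : Mat}
    (h : Cong (n+1) u (1 + (3:R3)^n • E)) :
    Cong (n+2) (u^3) (1 + (3:R3)^(n+1) • E) := by
  obtain ⟨m, rfl⟩ := Nat.exists_eq_add_of_le hn
  obtain ⟨C, hC⟩ := cong_iff_exists.mp h
  rw [cong_iff_exists]
  set G : Mat := E + (3:R3) • C with hG
  have hu : u = 1 + (3:R3)^(1+m) • G := by
    rw [hC, hG]; match_scalars <;> ring
  refine ⟨C + (3:R3)^m • (G*G) + (3:R3)^(2*m) • (G*G*G), ?_⟩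
  rw [hu, expand_cube, hG]
  match_scalars <;> ring

/-- multiplication at level 1 + 3^n -/
theorem Cong.mul_one_add {n : ℕ} (hn : 1 ≤ n) {u v : Mat} {X Y : Mat}
    (hu : Cong (n+1) u (1 + (3:R3)^n • X)) (hv : Cong (n+1) v (1 + (3:R3)^n • Y)) :
    Cong (n+1) (u * v) (1 + (3:R3)^n • (X + Y)) := by
  refine (hu.mul hv).trans ?_
  rw [cong_iff_exists]
  obtain ⟨m, rfl⟩ := Nat.exists_eq_add_of_le hn
  refine ⟨(3:R3)^m • (X*Y), ?_⟩
  simp only [mul_add, add_mul, one_mul, mul_one, smul_mul_assoc, mul_smul_comm, smul_smul]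
  match_scalars <;> ring

theorem Cong.pow_one_add {n : ℕ} (hn : 1 ≤ n) {u : Mat} {X : Mat}
    (hu : Cong (n+1) u (1 + (3:R3)^n • X)) (k : ℕ) :
    Cong (n+1) (u^k) (1 + (3:R3)^n • ((k:R3) • X)) := by
  induction k with
  | zero => simpa using Cong.refl _ _
  | succ k ih =>
      rw [pow_succ]
      refine (ih.mul_one_add hn hu).trans ?_
      rw [cong_iff_exists]
      refine ⟨0, ?_⟩
      push_cast
      match_scalars <;> ring


theorem three_dvd_iff (z : R3) : (3:R3) ∣ z ↔ PadicInt.toZMod z = 0 := by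
  have h1 : (((3:ℕ)):R3) = (3:R3) := by norm_num
  rw [← h1, ← PadicInt.norm_lt_one_iff_dvd, ← PadicInt.mem_nonunits,
    ← IsLocalRing.mem_maximalIdeal, ← PadicInt.ker_toZMod, RingHom.mem_ker]

theorem pow_dvd_iff_norm (z : R3) (n : ℕ) : (3:R3)^n ∣ z ↔ ‖z‖ ≤ (3:ℝ)^(-(n:ℤ)) := by
  have h1 : (((3:ℕ)):R3) = (3:R3) := by norm_num
  have h2 : (((3:ℕ)):ℝ) = (3:ℝ) := by norm_num
  rw [← h2, PadicInt.norm_le_pow_iff_mem_span_pow, Ideal.mem_span_singleton, h1]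

theorem toZMod_natCast (k : ℕ) : PadicInt.toZMod (k : R3) = (k : ZMod 3) := by
  simp

theorem dvd_val_sub (a : R3) :
    (3:R3) ∣ ((((PadicInt.toZMod a).val : ℕ) : R3) - a) := by
  rw [three_dvd_iff, map_sub, toZMod_natCast]
  simp [ZMod.natCast_val, ZMod.cast_id]
  rw [sub_eq_zero]; rfl

theorem map_toZMod_surjective :
    Function.Surjective (SpecialLinearGroup.map (n := Fin 2) (PadicInt.toZMod : ℤ_[3] →+* ZMod 3)) := by
  intro M
  set N : Mat := fun i j => (((M i j).val : ℕ) : R3) with hN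
  have hmap : N.map PadicInt.toZMod = (M : Matrix (Fin 2) (Fin 2) (ZMod 3)) := by
    ext i j
    rw [Matrix.map_apply, hN]
    simp only [map_natCast, ZMod.natCast_zmod_val]
  have hdetmod : PadicInt.toZMod N.det = 1 := by
    rw [RingHom.map_det, RingHom.mapMatrix_apply, hmap, M.2]
  have hunit : IsUnit N.det := by
    rw [PadicInt.isUnit_iff]
    rcases lt_or_eq_of_le (PadicInt.norm_le_one N.det) with hlt | heq
    · exfalso
      rw [PadicInt.norm_lt_one_iff_dvd] at hlt
      rw [show (((3:ℕ)):R3) = (3:R3) by norm_num, three_dvd_iff, hdetmod] at hlt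
      exact one_ne_zero hlt
    · exact heq
  set v : R3 := ↑hunit.unit⁻¹ with hv
  have hvd : N.det * v = 1 := by
    rw [hv]; exact hunit.mul_val_inv
  have hvmod : PadicInt.toZMod v = 1 := by
    have := congrArg PadicInt.toZMod hvd
    rw [_root_.map_mul, hdetmod, one_mul, _root_.map_one] at this
    exact this
  set N' : Mat := !![N 0 0, N 0 1 * v; N 1 0, N 1 1 * v] with hN'
  have hdet' : N'.det = 1 := by
    rw [hN', Matrix.det_fin_two_of]
    have hdN : N.det = N 0 0 * N 1 1 - N 0 1 * N 1 0 := Matrix.det_fin_two N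
    calc N 0 0 * (N 1 1 * v) - N 0 1 * v * (N 1 0) = N.det * v := by rw [hdN]; ring
    _ = 1 := hvd
  refine ⟨⟨N', hdet'⟩, ?_⟩
  apply Subtype.ext
  show (N').map PadicInt.toZMod = _
  have e01 : PadicInt.toZMod (N 0 1 * v) = PadicInt.toZMod (N 0 1) := by
    rw [_root_.map_mul, hvmod, mul_one]
  have e11 : PadicInt.toZMod (N 1 1 * v) = PadicInt.toZMod (N 1 1) := by
    rw [_root_.map_mul, hvmod, mul_one]
  have : N'.map PadicInt.toZMod = N.map PadicInt.toZMod := by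
    ext i j
    fin_cases i <;> fin_cases j <;>
      simp [hN', Matrix.map_apply, e01, e11]
  rw [this, hmap]


theorem Cong.conj {n : ℕ} {X Xi A E : Mat} (hXXi : X * Xi = 1)
    (h : Cong (n+1) A (1 + (3:R3)^n • E)) :
    Cong (n+1) (X * A * Xi) (1 + (3:R3)^n • (X * E * Xi)) := by
  obtain ⟨C, hC⟩ := cong_iff_exists.mp h
  rw [cong_iff_exists]
  refine ⟨X * C * Xi, ?_⟩
  rw [hC]
  simp only [mul_add, add_mul, one_mul, mul_one, smul_mul_assoc, mul_smul_comm, hXXi]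

end Stmt1Aux
set_option maxHeartbeats 3000000 in
open Stmt1Aux Subgroup in
theorem stmt_1 (α h : ℤ_[3]) (hα2 : α ^ 2 = -2) (hα1 : (3 : ℤ_[3]) ∣ (α - 1)) (hh : 2 * h = 1)
    (x y : SL(2, ℤ_[3]))
    (hx : (x : Matrix (Fin 2) (Fin 2) ℤ_[3]) = !![0, -1; 1, -1])
    (hy : (y : Matrix (Fin 2) (Fin 2) ℤ_[3]) = α • !![0, h; 1, -1])
    (P : Subgroup SL(2, ℤ_[3])) (hP : P = (Subgroup.closure {x, y}).topologicalClosure) :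
    P = Subgroup.comap
        (SpecialLinearGroup.map (PadicInt.toZMod : ℤ_[3] →+* ZMod 3))
        (Subgroup.zpowers (SpecialLinearGroup.map (PadicInt.toZMod : ℤ_[3] →+* ZMod 3) x)) ∧
    Nat.card (Subgroup.zpowers (SpecialLinearGroup.map (PadicInt.toZMod : ℤ_[3] →+* ZMod 3) x)) = 3 ∧
    IsClosed (P : Set SL(2, ℤ_[3])) ∧
    P.index = 8 := by
  set φ := (SpecialLinearGroup.map (n := Fin 2) (PadicInt.toZMod : ℤ_[3] →+* ZMod 3)) with hφ
  set H := Subgroup.closure {x, y} with hHdef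
  set Q := Subgroup.comap φ (Subgroup.zpowers (φ x)) with hQdef
  have hxH : x ∈ H := Subgroup.subset_closure (by simp)
  have hyH : y ∈ H := Subgroup.subset_closure (by simp)
  -- x has order 3
  have hx3 : x ^ 3 = 1 := by
    apply Subtype.ext
    show ((x:Mat))^3 = 1
    rw [hx]
    rw [pow_succ, pow_succ, pow_one, Matrix.one_fin_two, Matrix.mul_fin_two, Matrix.mul_fin_two]
    norm_num
  have hxinv : ((x⁻¹ : SL(2, ℤ_[3])) : Mat) = !![-1, 1; -1, 0] := by
    rw [Matrix.SpecialLinearGroup.coe_inv, hx, Matrix.adjugate_fin_two]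
    norm_num
  -- image of x mod 3
  have hφx : ((φ x : SL(2, ZMod 3)) : Matrix (Fin 2) (Fin 2) (ZMod 3)) = !![0, -1; 1, -1] := by
    show ((x:Mat)).map PadicInt.toZMod = _
    rw [hx]
    ext i j
    fin_cases i <;> fin_cases j <;> simp
  -- order of φ x is 3
  have hcard : Nat.card (Subgroup.zpowers (φ x)) = 3 := by
    rw [Nat.card_zpowers]
    refine orderOf_eq_prime ?_ ?_
    · rw [← _root_.map_pow, hx3, _root_.map_one]
    · intro hc
      have := congrArg (fun g : SL(2, ZMod 3) => (g : Matrix (Fin 2) (Fin 2) (ZMod 3))) hc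
      rw [hφx, Matrix.SpecialLinearGroup.coe_one] at this
      have h01 := congrFun (congrFun this 0) 1
      simp [Matrix.one_apply] at h01
  -- reduction facts for α and h
  have hα0 : PadicInt.toZMod α = 1 := by
    rw [three_dvd_iff] at hα1
    rw [map_sub, _root_.map_one, sub_eq_zero] at hα1
    exact hα1
  have hhmod : PadicInt.toZMod h = -1 := by
    have h2 : (2 : ZMod 3) * PadicInt.toZMod h = 1 := by
      have := congrArg PadicInt.toZMod hh
      rwa [_root_.map_mul, _root_.map_one, _root_.map_ofNat] at this
    revert h2
    generalize PadicInt.toZMod h = z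
    revert z; decide
  -- y reduces to the same matrix as x
  have hφy : φ y = φ x := by
    apply Subtype.ext
    show ((y:Mat)).map PadicInt.toZMod = ((x:Mat)).map PadicInt.toZMod
    rw [hx, hy]
    ext i j
    fin_cases i <;> fin_cases j <;>
      simp [Matrix.map_apply, hα0, hhmod]
  -- Q is open hence closed
  have hker : (φ.ker : Set SL(2, ℤ_[3])) =
      ⋂ i : Fin 2, ⋂ j : Fin 2, {g : SL(2, ℤ_[3]) | ‖(g : Mat) i j - (1 : Mat) i j‖ < 1} := by
    ext g
    simp only [SetLike.mem_coe, MonoidHom.mem_ker, Set.mem_iInter, Set.mem_setOf_eq]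
    constructor
    · intro hg i j
      have := congrArg (fun z : SL(2, ZMod 3) => (z : Matrix (Fin 2) (Fin 2) (ZMod 3)) i j) hg
      have h2 : PadicInt.toZMod ((g : Mat) i j) = PadicInt.toZMod ((1 : Mat) i j) := by
        have hone : ((1 : Mat)).map PadicInt.toZMod = (1 : Matrix (Fin 2) (Fin 2) (ZMod 3)) := by
          ext a b; by_cases hab : a = b <;> simp [Matrix.one_apply, hab]
        calc PadicInt.toZMod ((g : Mat) i j)
            = (((g : Mat)).map PadicInt.toZMod) i j := rfl
          _ = ((1 : Matrix (Fin 2) (Fin 2) (ZMod 3))) i j := this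
          _ = (((1 : Mat)).map PadicInt.toZMod) i j := by rw [hone]
          _ = PadicInt.toZMod ((1 : Mat) i j) := rfl
      rw [PadicInt.norm_lt_one_iff_dvd, show (((3:ℕ)):R3) = (3:R3) by norm_num,
        three_dvd_iff, map_sub, h2, sub_self]
    · intro hg
      apply Subtype.ext
      show ((g:Mat)).map PadicInt.toZMod = _
      rw [Matrix.SpecialLinearGroup.coe_one]
      ext i j
      have := hg i j
      rw [PadicInt.norm_lt_one_iff_dvd, show (((3:ℕ)):R3) = (3:R3) by norm_num,
        three_dvd_iff, map_sub, sub_eq_zero] at this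
      rw [Matrix.map_apply, this]
      by_cases hab : i = j <;> simp [Matrix.one_apply, hab]
  have hker_open : IsOpen (φ.ker : Set SL(2, ℤ_[3])) := by
    rw [hker]
    refine isOpen_iInter_of_finite fun i => isOpen_iInter_of_finite fun j => ?_
    have hc : Continuous fun g : SL(2, ℤ_[3]) => (g : Mat) i j - (1 : Mat) i j :=
      ((continuous_subtype_val.matrix_elem i j).sub continuous_const)
    have : {g : SL(2, ℤ_[3]) | ‖(g : Mat) i j - (1 : Mat) i j‖ < 1}
        = (fun g : SL(2, ℤ_[3]) => (g : Mat) i j - (1 : Mat) i j) ⁻¹' {z : R3 | ‖z‖ < 1} := rfl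
    rw [this]
    exact (isOpen_lt continuous_norm continuous_const).preimage hc
  have hQopen : IsOpen (Q : Set SL(2, ℤ_[3])) := by
    refine Subgroup.isOpen_mono (H₁ := φ.ker) ?_ hker_open
    intro g hg
    rw [MonoidHom.mem_ker] at hg
    rw [hQdef, Subgroup.mem_comap, hg]
    exact Subgroup.one_mem _
  have hQclosed : IsClosed (Q : Set SL(2, ℤ_[3])) := Q.isClosed_of_isOpen hQopen
  -- P ≤ Q
  have hPQ : P ≤ Q := by
    rw [hP]
    refine Subgroup.topologicalClosure_minimal _ ?_ hQclosed
    rw [Subgroup.closure_le]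
    rintro g (rfl | rfl)
    · rw [SetLike.mem_coe, hQdef, Subgroup.mem_comap]
      exact Subgroup.mem_zpowers _
    · rw [SetLike.mem_coe, hQdef, Subgroup.mem_comap, hφy]
      exact Subgroup.mem_zpowers _
  -- arithmetic facts
  have h30 : ((3:R3)) ≠ 0 := by norm_num
  obtain ⟨t, ht⟩ := hα1
  have hα' : α = 1 + 3*t := by linear_combination ht
  have e2 : (2:R3)*t + 3*t^2 = -1 := by
    refine mul_left_cancel₀ h30 ?_
    linear_combination hα2 - (α + 1 + 3*t) * hα'
  have ht1 : (3:R3) ∣ (t - 1) := by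
    have e1 : 2*(t-1) = -(3:R3)*(1+t^2) := by linear_combination e2
    exact ⟨h*(-(1+t^2)), by linear_combination h * e1 - (t-1) * hh⟩
  have hα4 : (9:R3) ∣ α - 4 := by
    obtain ⟨k, hk⟩ := ht1
    exact ⟨k, by linear_combination ht + 3*hk⟩
  have hαh : (9:R3) ∣ 2 - α*h := by
    obtain ⟨k2, hk2⟩ := hα4
    exact ⟨-(h*k2), by linear_combination (-h) * hk2 - 2 * hh⟩
  -- the element c = y * x⁻¹ and its congruence
  have hcmat : ((y * x⁻¹ : SL(2, ℤ_[3])) : Mat) = !![-(α*h), 0; 0, α] := by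
    rw [Matrix.SpecialLinearGroup.coe_mul, hy, hxinv]
    ext i j
    fin_cases i <;> fin_cases j <;>
      simp [Matrix.mul_apply, Fin.sum_univ_two] <;> ring
  set A₀ : Mat := !![(-1:R3), 0; 0, 1] with hA₀
  set B₁ : Mat := !![(1:R3), 0; 2, -1] with hB₁
  set B₂ : Mat := !![(1:R3), -2; 0, -1] with hB₂
  have hc : Cong 2 ((y * x⁻¹ : SL(2, ℤ_[3])) : Mat) (1 + (3:R3)^1 • A₀) := by
    rw [cong_iff_exists]
    obtain ⟨w1, hw1⟩ := hαh
    obtain ⟨k2, hk2⟩ := hα4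
    refine ⟨!![w1, 0; 0, k2], ?_⟩
    rw [hcmat]
    ext i j
    fin_cases i <;> fin_cases j <;>
      simp [hA₀, Matrix.add_apply, Matrix.smul_apply, Matrix.one_apply, smul_eq_mul] <;>
      first
        | linear_combination hw1
        | linear_combination hk2
  have hxx : ((x : Mat)) * ((x⁻¹ : SL(2, ℤ_[3])) : Mat) = 1 := by
    rw [← Matrix.SpecialLinearGroup.coe_mul, mul_inv_cancel, Matrix.SpecialLinearGroup.coe_one]
  have hxx' : (((x⁻¹ : SL(2, ℤ_[3])) : Mat)) * ((x : Mat)) = 1 := by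
    rw [← Matrix.SpecialLinearGroup.coe_mul, inv_mul_cancel, Matrix.SpecialLinearGroup.coe_one]
  have hconj1 : (x : Mat) * A₀ * ((x⁻¹ : SL(2, ℤ_[3])) : Mat) = B₁ := by
    rw [hx, hxinv, hA₀, hB₁, Matrix.mul_fin_two, Matrix.mul_fin_two]
    norm_num
  have hconj2 : ((x⁻¹ : SL(2, ℤ_[3])) : Mat) * A₀ * (x : Mat) = B₂ := by
    rw [hx, hxinv, hA₀, hB₂, Matrix.mul_fin_two, Matrix.mul_fin_two]
    norm_num
  have hcH : (y * x⁻¹ : SL(2, ℤ_[3])) ∈ H := mul_mem hyH (inv_mem hxH)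
  -- generators at every level
  have gens : ∀ n, 1 ≤ n → ∃ u v w : SL(2, ℤ_[3]), u ∈ H ∧ v ∈ H ∧ w ∈ H ∧
      Cong (n+1) (u : Mat) (1 + (3:R3)^n • A₀) ∧
      Cong (n+1) (v : Mat) (1 + (3:R3)^n • B₁) ∧
      Cong (n+1) (w : Mat) (1 + (3:R3)^n • B₂) := by
    intro n hn
    induction n, hn using Nat.le_induction with
    | base =>
        refine ⟨y * x⁻¹, x * (y * x⁻¹) * x⁻¹, x⁻¹ * (y * x⁻¹) * x,
          hcH, mul_mem (mul_mem hxH hcH) (inv_mem hxH), mul_mem (mul_mem (inv_mem hxH) hcH) hxH,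
          hc, ?_, ?_⟩
        · have hcj := Cong.conj (n := 1) hxx hc
          rw [hconj1] at hcj
          rw [Matrix.SpecialLinearGroup.coe_mul, Matrix.SpecialLinearGroup.coe_mul]
          exact hcj
        · have hcj := Cong.conj (n := 1) hxx' hc
          rw [hconj2] at hcj
          rw [Matrix.SpecialLinearGroup.coe_mul, Matrix.SpecialLinearGroup.coe_mul]
          exact hcj
    | succ n hn ih =>
        obtain ⟨u, v, w, hu, hv, hw, hu', hv', hw'⟩ := ih
        refine ⟨u^3, v^3, w^3, pow_mem hu 3, pow_mem hv 3, pow_mem hw 3, ?_, ?_, ?_⟩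
        · rw [Matrix.SpecialLinearGroup.coe_pow]; exact hu'.cube hn
        · rw [Matrix.SpecialLinearGroup.coe_pow]; exact hv'.cube hn
        · rw [Matrix.SpecialLinearGroup.coe_pow]; exact hw'.cube hn
  -- the refinement step
  have step : ∀ n, 1 ≤ n → ∀ r : SL(2, ℤ_[3]), Cong n (r : Mat) 1 →
      ∃ s ∈ H, Cong (n+1) (s : Mat) (r : Mat) := by
    intro n hn r hr
    obtain ⟨A, hA⟩ := cong_iff_exists.mp hr
    have hdet : ((r : Mat)).det = 1 := r.2
    rw [hA] at hdet
    have hdet' : Matrix.det ((1 : Mat) + (3:R3)^n • A)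
        = 1 + (3:R3)^n*(A 0 0 + A 1 1) + (3:R3)^n*(3:R3)^n*(A 0 0*A 1 1 - A 0 1*A 1 0) := by
      rw [Matrix.det_fin_two]
      simp only [Matrix.add_apply, Matrix.smul_apply, Matrix.one_apply, smul_eq_mul]
      norm_num
      ring
    have htr0 : (3:R3)^n * ((A 0 0 + A 1 1) + (3:R3)^n*(A 0 0*A 1 1 - A 0 1*A 1 0)) = 0 := by
      rw [hdet'] at hdet
      linear_combination hdet
    have htr : A 0 0 + A 1 1 = -((3:R3)^n*(A 0 0*A 1 1 - A 0 1*A 1 0)) := by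
      rcases mul_eq_zero.mp htr0 with hcon | hok
      · exact absurd hcon (pow_ne_zero _ h30)
      · linear_combination hok
    have htrd : (3:R3) ∣ (A 0 0 + A 1 1) := by
      obtain ⟨m, rfl⟩ := Nat.exists_eq_add_of_le hn
      rw [htr]
      exact Dvd.dvd.neg_right ⟨(3:R3)^m*(A 0 0*A 1 1 - A 0 1*A 1 0), by rw [pow_add, pow_one]; ring⟩
    obtain ⟨e4, he4⟩ := htrd
    obtain ⟨u, v, w, hu, hv, hw, hu', hv', hw'⟩ := gens n hn
    set ka := (PadicInt.toZMod (-A 1 0 + A 0 1 - A 0 0)).val with hka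
    set kb := (PadicInt.toZMod (-A 1 0)).val with hkb
    set kd := (PadicInt.toZMod (A 0 1)).val with hkd
    obtain ⟨e1, he1⟩ := dvd_val_sub (-A 1 0 + A 0 1 - A 0 0)
    obtain ⟨e2', he2⟩ := dvd_val_sub (-A 1 0)
    obtain ⟨e3, he3⟩ := dvd_val_sub (A 0 1)
    refine ⟨u^ka * (v^kb * w^kd),
      mul_mem (pow_mem hu ka) (mul_mem (pow_mem hv kb) (pow_mem hw kd)), ?_⟩
    have hbig : Cong (n+1) ((u : Mat)^ka * ((v : Mat)^kb * (w : Mat)^kd))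
        (1 + (3:R3)^n • (((ka:R3)) • A₀ + (((kb:R3)) • B₁ + ((kd:R3)) • B₂))) :=
      Cong.mul_one_add hn (hu'.pow_one_add hn ka)
        (Cong.mul_one_add hn (hv'.pow_one_add hn kb) (hw'.pow_one_add hn kd))
    have hcoe : ((u^ka * (v^kb * w^kd) : SL(2, ℤ_[3])) : Mat)
        = (u : Mat)^ka * ((v : Mat)^kb * (w : Mat)^kd) := by
      rw [Matrix.SpecialLinearGroup.coe_mul, Matrix.SpecialLinearGroup.coe_mul,
        Matrix.SpecialLinearGroup.coe_pow, Matrix.SpecialLinearGroup.coe_pow, Matrix.SpecialLinearGroup.coe_pow]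
    rw [hcoe]
    refine hbig.trans ?_
    rw [hA]
    intro i j
    have key : (3:R3) ∣ ((((ka:R3)) • A₀ + (((kb:R3)) • B₁ + ((kd:R3)) • B₂)) i j - A i j) := by
      fin_cases i <;> fin_cases j <;>
        simp only [hA₀, hB₁, hB₂, Matrix.add_apply, Matrix.smul_apply, smul_eq_mul,
          Fin.zero_eta, Fin.mk_one, Matrix.cons_val', Matrix.cons_val_zero, Matrix.cons_val_one,
          Matrix.head_cons, Matrix.empty_val', Matrix.cons_val_fin_one, Matrix.head_fin_const, Matrix.of_apply]
      · exact ⟨-e1 + e2' + e3, by linear_combination -he1 + he2 + he3⟩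
      · exact ⟨-(A 0 1) - 2*e3, by linear_combination -2*he3⟩
      · exact ⟨-(A 1 0) + 2*e2', by linear_combination 2*he2⟩
      · exact ⟨e1 - e2' - e3 - e4, by linear_combination he1 - he2 - he3 - he4⟩
    obtain ⟨wit, hwit⟩ := key
    refine ⟨wit, ?_⟩
    have : ((1 : Mat) + (3:R3)^n • (((ka:R3)) • A₀ + (((kb:R3)) • B₁ + ((kd:R3)) • B₂))) i j
        - ((1 : Mat) + (3:R3)^n • A) i j
        = (3:R3)^n * ((((ka:R3)) • A₀ + (((kb:R3)) • B₁ + ((kd:R3)) • B₂)) i j - A i j) := by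
      simp only [Matrix.add_apply, Matrix.smul_apply, smul_eq_mul]
      ring
    rw [this, hwit, pow_succ]
    ring
  -- approximation of elements of Q by elements of H
  have approx : ∀ n, 1 ≤ n → ∀ q : SL(2, ℤ_[3]), q ∈ Q → ∃ p ∈ H, Cong n (p : Mat) (q : Mat) := by
    intro n hn
    induction n, hn using Nat.le_induction with
    | base =>
        intro q hq
        rw [hQdef, Subgroup.mem_comap, Subgroup.mem_zpowers_iff] at hq
        obtain ⟨m, hm⟩ := hq
        refine ⟨x ^ m, zpow_mem hxH m, ?_⟩
        have hφp : φ (x ^ m) = φ q := by rw [map_zpow, hm]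
        intro i j
        have hentry : PadicInt.toZMod (((x^m : SL(2, ℤ_[3])) : Mat) i j)
            = PadicInt.toZMod ((q : Mat) i j) :=
          congrArg (fun g : SL(2, ZMod 3) => (g : Matrix (Fin 2) (Fin 2) (ZMod 3)) i j) hφp
        rw [pow_one, three_dvd_iff, map_sub, hentry, sub_self]
    | succ n hn ih =>
        intro q hq
        obtain ⟨p, hpH, hp⟩ := ih q hq
        have hr : Cong n ((p⁻¹ * q : SL(2, ℤ_[3])) : Mat) 1 := by
          have h1 : Cong n (((p⁻¹ : SL(2, ℤ_[3])) : Mat) * (q : Mat))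
              (((p⁻¹ : SL(2, ℤ_[3])) : Mat) * (p : Mat)) :=
            (Cong.refl n _).mul hp.symm
          rw [← Matrix.SpecialLinearGroup.coe_mul, ← Matrix.SpecialLinearGroup.coe_mul, inv_mul_cancel,
            Matrix.SpecialLinearGroup.coe_one] at h1
          exact h1
        obtain ⟨s, hsH, hs⟩ := step n hn _ hr
        refine ⟨p * s, mul_mem hpH hsH, ?_⟩
        have h2 : Cong (n+1) ((p : Mat) * (s : Mat))
            ((p : Mat) * ((p⁻¹ * q : SL(2, ℤ_[3])) : Mat)) :=
          (Cong.refl _ _).mul hs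
        rw [← Matrix.SpecialLinearGroup.coe_mul, ← Matrix.SpecialLinearGroup.coe_mul,
          mul_inv_cancel_left] at h2
        exact h2
  -- Q ≤ P
  have hQP : Q ≤ P := by
    intro q hq
    rw [hP]
    have hseq : ∀ n : ℕ, ∃ p : SL(2, ℤ_[3]), p ∈ H ∧ Cong (n+1) (p : Mat) (q : Mat) := by
      intro n
      obtain ⟨p, h1, h2⟩ := approx (n+1) (by omega) q hq
      exact ⟨p, h1, h2⟩
    choose p hpH hpc using hseq
    have htend : Filter.Tendsto p Filter.atTop (𝓝 q) := by
      refine (Topology.IsInducing.tendsto_nhds_iff (g := fun g : SL(2, ℤ_[3]) => (g : Mat)) ⟨rfl⟩).mpr ?_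
      show Filter.Tendsto (fun n => ((p n : Mat))) Filter.atTop (𝓝 ((q : Mat)))
      apply tendsto_pi_nhds.mpr
      intro i
      apply tendsto_pi_nhds.mpr
      intro j
      rw [tendsto_iff_norm_sub_tendsto_zero]
      apply squeeze_zero (fun n => norm_nonneg _) (g := fun n : ℕ => (1/3 : ℝ)^(n+1))
      · intro n
        have hd := (pow_dvd_iff_norm _ _).mp (hpc n i j)
        have heq : (3:ℝ)^(-((n+1:ℕ):ℤ)) = (1/3:ℝ)^(n+1) := by
          rw [_root_.zpow_neg, zpow_natCast, one_div, inv_pow]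
        rw [heq] at hd
        exact hd
      · exact (tendsto_pow_atTop_nhds_zero_of_lt_one (by norm_num) (by norm_num)).comp
          (Filter.tendsto_add_atTop_nat 1)
    have hcl : q ∈ _root_.closure ((H : Set SL(2, ℤ_[3]))) :=
      mem_closure_of_tendsto htend (Filter.Eventually.of_forall fun n => hpH n)
    exact hcl
  have hPeq : P = Q := le_antisymm hPQ hQP
  refine ⟨hPeq, hcard, ?_, ?_⟩
  · rw [hP]
    exact Subgroup.isClosed_topologicalClosure _
  · rw [hPeq]
    have hidx : Q.index = (Subgroup.zpowers (φ x)).index := by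
      rw [hQdef]
      exact Subgroup.index_comap_of_surjective _ map_toZMod_surjective
    have h24 : Nat.card (SL(2, ZMod 3)) = 24 := by
      rw [Nat.card_eq_fintype_card]; decide
    have hmul := Subgroup.card_mul_index (Subgroup.zpowers (φ x))
    rw [hcard, h24] at hmul
    omega

end
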